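/- sat(I_k, m, n) = ex(I_k, m, n) = (k−1)(m + n − (k−1)) for all m, n ≥ k, where I_k is the k×k identity matrix. -/

import Mathlib

/-- `M` contains the pattern `P`: there is an order-preserving selection of rows and
columns of `M` whose submatrix can be turned into `P` by changing `1`s to `0`s. -/
def Contains {k l m n : ℕ} (P : Fin k → Fin l → Bool) (M : Fin m → Fin n → Bool) : Prop :=
  ∃ r : Fin k → Fin m, ∃ c : Fin l → Fin n, StrictMono r ∧ StrictMono c ∧
    ∀ i j, P i j = true → M (r i) (c j) = true

def Avoids {k l m n : ℕ} (P : Fin k → Fin l → Bool) (M : Fin m → Fin n → Bool) : Prop :=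
  ¬ Contains P M

/-- The weight of a 0-1 matrix: the number of its `1` entries. -/
def weight {m n : ℕ} (M : Fin m → Fin n → Bool) : ℕ :=
  (Finset.univ.filter (fun p : Fin m × Fin n => M p.1 p.2 = true)).card

/-- The matrix obtained from `M` by changing the entry at `(p,q)` to `1`. -/
def setOne {m n : ℕ} (M : Fin m → Fin n → Bool) (p : Fin m) (q : Fin n) :
    Fin m → Fin n → Bool :=
  fun i j => if i = p ∧ j = q then true else M i j

/-- `M` is saturating for `P`: it avoids `P` and flipping any `0` entry creates an
occurrence of `P`. -/
def Saturating {k l m n : ℕ} (P : Fin k → Fin l → Bool) (M : Fin m → Fin n → Bool) : Prop :=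
  Avoids P M ∧ ∀ p q, M p q = false → Contains P (setOne M p q)

/-- `(r, c)` is an occurrence of `P` in `M`. -/
def IsOcc {k l m n : ℕ} (P : Fin k → Fin l → Bool) (M : Fin m → Fin n → Bool)
    (r : Fin k → Fin m) (c : Fin l → Fin n) : Prop :=
  StrictMono r ∧ StrictMono c ∧ ∀ i j, P i j = true → M (r i) (c j) = true

/-- `M` is semisaturating for `P`: flipping any `0` entry creates a new occurrence of `P`. -/
def Semisaturating {k l m n : ℕ} (P : Fin k → Fin l → Bool) (M : Fin m → Fin n → Bool) : Prop :=
  ∀ p q, M p q = false → ∃ r c, IsOcc P (setOne M p q) r c ∧ ¬ IsOcc P M r c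

/-- `ex(P,m,n)`: the maximum weight of an `m × n` matrix avoiding `P`. -/
noncomputable def exF {k l : ℕ} (P : Fin k → Fin l → Bool) (m n : ℕ) : ℕ :=
  sSup {w | ∃ M : Fin m → Fin n → Bool, Avoids P M ∧ weight M = w}

/-- `sat(P,m,n)`: the minimum weight of an `m × n` matrix saturating for `P`. -/
noncomputable def satF {k l : ℕ} (P : Fin k → Fin l → Bool) (m n : ℕ) : ℕ :=
  sInf {w | ∃ M : Fin m → Fin n → Bool, Saturating P M ∧ weight M = w}

/-- `ssat(P,m,n)`: the minimum weight of an `m × n` matrix semisaturating for `P`. -/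
noncomputable def ssatF {k l : ℕ} (P : Fin k → Fin l → Bool) (m n : ℕ) : ℕ :=
  sInf {w | ∃ M : Fin m → Fin n → Bool, Semisaturating P M ∧ weight M = w}

/-- The `k × k` identity pattern. -/
def Imat (k : ℕ) : Fin k → Fin k → Bool := fun i j => decide (i = j)

namespace SatIk

variable {k m n : ℕ}

lemma imat_iff {k : ℕ} {i j : Fin k} : Imat k i j = true ↔ i = j := by
  simp [Imat]

def ones {m n : ℕ} (M : Fin m → Fin n → Bool) : Finset (Fin m × Fin n) :=
  Finset.univ.filter (fun p => M p.1 p.2 = true)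

lemma weight_eq {m n : ℕ} (M : Fin m → Fin n → Bool) : weight M = (ones M).card := rfl

lemma mem_ones {M : Fin m → Fin n → Bool} {p : Fin m × Fin n} :
    p ∈ ones M ↔ M p.1 p.2 = true := by simp [ones]

/-- chain of ones under strict domination -/
def ChainB {m n : ℕ} (M : Fin m → Fin n → Bool) {c : ℕ} (g : Fin c → Fin m × Fin n) : Prop :=
  (∀ i j : Fin c, i < j → (g i).1.val < (g j).1.val ∧ (g i).2.val < (g j).2.val) ∧
  (∀ i, M (g i).1 (g i).2 = true)

lemma contains_of_chain {M : Fin m → Fin n → Bool} (g : Fin k → Fin m × Fin n)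
    (h : ChainB M g) : Contains (Imat k) M := by
  refine ⟨fun i => (g i).1, fun i => (g i).2, ?_, ?_, ?_⟩
  · intro i j hij; exact Fin.lt_def.mpr (h.1 i j hij).1
  · intro i j hij; exact Fin.lt_def.mpr (h.1 i j hij).2
  · intro i j hij; rw [imat_iff] at hij; subst hij; exact h.2 i

lemma chain_lt_of_avoids {M : Fin m → Fin n → Bool} (hA : Avoids (Imat k) M)
    {c : ℕ} (g : Fin c → Fin m × Fin n) (h : ChainB M g) : c < k := by
  by_contra hc
  push_neg at hc
  refine hA (contains_of_chain (fun i => g (Fin.castLE hc i)) ⟨?_, fun i => h.2 _⟩)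
  intro i j hij
  exact h.1 _ _ hij

lemma sameDiag_card_lt {M : Fin m → Fin n → Bool} (hA : Avoids (Imat k) M)
    (S : Finset (Fin m × Fin n)) (hS : ∀ q ∈ S, M q.1 q.2 = true)
    (hd : ∀ p ∈ S, ∀ q ∈ S, p.1.val + q.2.val = q.1.val + p.2.val) :
    S.card < k := by
  have hinj : Set.InjOn (fun q : Fin m × Fin n => q.1) S := by
    intro a ha b hb hab
    have hab : a.1 = b.1 := hab
    have h1 := hd a ha b hb
    have h2 : a.1.val = b.1.val := congrArg Fin.val hab
    have h3 : a.2 = b.2 := Fin.ext (by omega)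
    exact Prod.ext hab h3
  have hT : (S.image (fun q => q.1)).card = S.card := Finset.card_image_of_injOn hinj
  set T := S.image (fun q => q.1) with hTdef
  have e := T.orderIsoOfFin hT
  have hmem : ∀ i : Fin S.card, ∃ q ∈ S, q.1 = (e i : Fin m) := by
    intro i
    have h0 : (e i : Fin m) ∈ T := (e i).2
    obtain ⟨q, hq, hq1⟩ := Finset.mem_image.mp h0
    exact ⟨q, hq, hq1⟩
  choose f hf hf1 using hmem
  have hchain : ChainB M f := by
    constructor
    · intro i j hij
      have h1 : (e i : Fin m) < (e j : Fin m) := by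
        exact_mod_cast e.strictMono hij
      have h2 : (f i).1.val < (f j).1.val := by
        rw [hf1 i, hf1 j]; exact Fin.lt_def.mp h1
      have h3 := hd (f i) (hf i) (f j) (hf j)
      exact ⟨h2, by omega⟩
    · intro i; exact hS _ (hf i)
  exact chain_lt_of_avoids hA f hchain

def beforeS (M : Fin m → Fin n → Bool) (p : Fin m × Fin n) : Finset (Fin m × Fin n) :=
  (ones M).filter (fun q => p.1.val + q.2.val = q.1.val + p.2.val ∧ q.1.val < p.1.val)

def afterS (M : Fin m → Fin n → Bool) (p : Fin m × Fin n) : Finset (Fin m × Fin n) :=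
  (ones M).filter (fun q => p.1.val + q.2.val = q.1.val + p.2.val ∧ p.1.val < q.1.val)

lemma mem_beforeS {M : Fin m → Fin n → Bool} {p q : Fin m × Fin n} :
    q ∈ beforeS M p ↔ M q.1 q.2 = true ∧
      p.1.val + q.2.val = q.1.val + p.2.val ∧ q.1.val < p.1.val := by
  simp [beforeS, mem_ones, ones]

lemma mem_afterS {M : Fin m → Fin n → Bool} {p q : Fin m × Fin n} :
    q ∈ afterS M p ↔ M q.1 q.2 = true ∧
      p.1.val + q.2.val = q.1.val + p.2.val ∧ p.1.val < q.1.val := by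
  simp [afterS, mem_ones, ones]

lemma beforeS_mono {M : Fin m → Fin n → Bool} {p pm : Fin m × Fin n}
    (hdd : p.1.val + pm.2.val = pm.1.val + p.2.val) (hlt : pm.1.val < p.1.val) :
    beforeS M pm ⊆ beforeS M p := by
  intro q hq
  rw [mem_beforeS] at hq ⊢
  exact ⟨hq.1, by omega, by omega⟩

lemma beforeS_card_succ {M : Fin m → Fin n → Bool} {p pm : Fin m × Fin n}
    (hdd : p.1.val + pm.2.val = pm.1.val + p.2.val) (hlt : pm.1.val < p.1.val)
    (hone : M pm.1 pm.2 = true) :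
    (beforeS M pm).card + 1 ≤ (beforeS M p).card := by
  have hsub : insert pm (beforeS M pm) ⊆ beforeS M p := by
    intro q hq
    rcases Finset.mem_insert.mp hq with h | h
    · subst h; exact mem_beforeS.mpr ⟨hone, by omega, hlt⟩
    · exact beforeS_mono hdd hlt h
  have hnot : pm ∉ beforeS M pm := by
    intro h; have := (mem_beforeS.mp h).2.2; omega
  calc (beforeS M pm).card + 1 = (insert pm (beforeS M pm)).card := by
        rw [Finset.card_insert_of_notMem hnot]
    _ ≤ (beforeS M p).card := Finset.card_le_card hsub

lemma afterS_mono {M : Fin m → Fin n → Bool} {p pp : Fin m × Fin n}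
    (hdd : p.1.val + pp.2.val = pp.1.val + p.2.val) (hlt : p.1.val < pp.1.val) :
    afterS M pp ⊆ afterS M p := by
  intro q hq
  rw [mem_afterS] at hq ⊢
  exact ⟨hq.1, by omega, by omega⟩

lemma afterS_card_succ {M : Fin m → Fin n → Bool} {p pp : Fin m × Fin n}
    (hdd : p.1.val + pp.2.val = pp.1.val + p.2.val) (hlt : p.1.val < pp.1.val)
    (hone : M pp.1 pp.2 = true) :
    (afterS M pp).card + 1 ≤ (afterS M p).card := by
  have hsub : insert pp (afterS M pp) ⊆ afterS M p := by
    intro q hq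
    rcases Finset.mem_insert.mp hq with h | h
    · subst h; exact mem_afterS.mpr ⟨hone, by omega, hlt⟩
    · exact afterS_mono hdd hlt h
  have hnot : pp ∉ afterS M pp := by
    intro h; have := (mem_afterS.mp h).2.2; omega
  calc (afterS M pp).card + 1 = (insert pp (afterS M pp)).card := by
        rw [Finset.card_insert_of_notMem hnot]
    _ ≤ (afterS M p).card := Finset.card_le_card hsub

lemma setOne_true_of {M : Fin m → Fin n → Bool} {a : Fin m} {b : Fin n}
    {i : Fin m} {j : Fin n} (h : M i j = true) : setOne M a b i j = true := by
  unfold setOne; split <;> simp [h]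

lemma setOne_self {M : Fin m → Fin n → Bool} (a : Fin m) (b : Fin n) :
    setOne M a b a b = true := by
  unfold setOne; rw [if_pos ⟨rfl, rfl⟩]

lemma sat_zero {M : Fin m → Fin n → Bool} (hM : Saturating (Imat k) M)
    {p : Fin m × Fin n} (hz : M p.1 p.2 = false) :
    ∃ t : ℕ, t < k ∧
      (∃ gB : Fin t → Fin m × Fin n, ChainB M gB ∧
        ∀ i, (gB i).1.val < p.1.val ∧ (gB i).2.val < p.2.val) ∧
      (∃ gA : Fin (k - 1 - t) → Fin m × Fin n, ChainB M gA ∧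
        ∀ i, p.1.val < (gA i).1.val ∧ p.2.val < (gA i).2.val) := by
  obtain ⟨r, c, hr, hc, hocc⟩ := hM.2 p.1 p.2 hz
  have hex : ∃ i0 : Fin k, r i0 = p.1 ∧ c i0 = p.2 := by
    by_contra hno
    push_neg at hno
    apply hM.1
    refine ⟨r, c, hr, hc, ?_⟩
    intro i j hij
    rw [imat_iff] at hij; subst hij
    have h1 := hocc i i (by simp [Imat])
    unfold setOne at h1
    rw [if_neg] at h1
    · exact h1
    · rintro ⟨h2, h3⟩
      exact hno i h2 h3
  obtain ⟨i0, hi01, hi02⟩ := hex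
  have hone : ∀ x : Fin k, x ≠ i0 → M (r x) (c x) = true := by
    intro x hx
    have h1 := hocc x x (by simp [Imat])
    unfold setOne at h1
    rw [if_neg] at h1
    · exact h1
    · rintro ⟨h2, h3⟩
      exact hx (hr.injective (h2.trans hi01.symm))
  refine ⟨i0.val, i0.isLt, ?_, ?_⟩
  · refine ⟨fun j => (r ⟨j.val, by omega⟩, c ⟨j.val, by omega⟩), ⟨?_, ?_⟩, ?_⟩
    · intro i j hij
      have hij' : (⟨i.val, by omega⟩ : Fin k) < ⟨j.val, by omega⟩ := hij
      exact ⟨hr hij', hc hij'⟩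
    · intro i
      refine hone _ ?_
      intro hcon
      have : i.val = i0.val := congrArg Fin.val hcon
      omega
    · intro i
      have hlt : (⟨i.val, by omega⟩ : Fin k) < i0 := by
        rw [Fin.lt_def]; exact i.isLt
      constructor
      · have := hr hlt; rw [hi01] at this; exact this
      · have := hc hlt; rw [hi02] at this; exact this
  · refine ⟨fun j => (r ⟨i0.val + 1 + j.val, by omega⟩, c ⟨i0.val + 1 + j.val, by omega⟩),
      ⟨?_, ?_⟩, ?_⟩
    · intro i j hij
      have hij0 : i.val < j.val := hij
      have hij' : (⟨i0.val + 1 + i.val, by omega⟩ : Fin k) < ⟨i0.val + 1 + j.val, by omega⟩ := by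
        rw [Fin.lt_def]; simp; omega
      exact ⟨hr hij', hc hij'⟩
    · intro i
      refine hone _ ?_
      intro hcon
      have : i0.val + 1 + i.val = i0.val := congrArg Fin.val hcon
      omega
    · intro i
      have hlt : i0 < (⟨i0.val + 1 + i.val, by omega⟩ : Fin k) := by
        rw [Fin.lt_def]; simp; omega
      constructor
      · have := hr hlt; rw [hi01] at this; exact this
      · have := hc hlt; rw [hi02] at this; exact this

lemma before_ge {M : Fin m → Fin n → Bool} (hM : Saturating (Imat k) M) :
    ∀ N : ℕ, ∀ p : Fin m × Fin n, p.1.val ≤ N →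
      ∀ c : ℕ, ∀ g : Fin c → Fin m × Fin n, ChainB M g →
      (∀ i, (g i).1.val < p.1.val ∧ (g i).2.val < p.2.val) →
      c ≤ (beforeS M p).card := by
  intro N
  induction N with
  | zero =>
    intro p hp c g hg hdom
    match c with
    | 0 => exact Nat.zero_le _
    | c + 1 =>
      have := hdom ⟨0, by omega⟩
      omega
  | succ N ih =>
    intro p hp c g hg hdom
    match c with
    | 0 => exact Nat.zero_le _
    | c + 1 =>
      have hlast := hdom ⟨c, by omega⟩
      have hp1 : 1 ≤ p.1.val := by omega
      have hp2 : 1 ≤ p.2.val := by omega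
      set pm : Fin m × Fin n :=
        (⟨p.1.val - 1, by omega⟩, ⟨p.2.val - 1, by omega⟩) with hpmdef
      have hdd : p.1.val + pm.2.val = pm.1.val + p.2.val := by
        simp [hpmdef]; omega
      have hltm : pm.1.val < p.1.val := by simp [hpmdef]; omega
      have hpmN : pm.1.val ≤ N := by simp [hpmdef]; omega
      have hdompm : ∀ i : Fin (c + 1), (g i).1.val ≤ pm.1.val ∧ (g i).2.val ≤ pm.2.val := by
        intro i
        have := hdom i
        constructor <;> simp [hpmdef] <;> omega
      by_cases hpm : M pm.1 pm.2 = true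
      · -- pm is a one : use first c elements of g, all strictly below pm
        have hIH : c ≤ (beforeS M pm).card := by
          refine ih pm hpmN c (fun j => g ⟨j.val, by omega⟩) ⟨?_, ?_⟩ ?_
          · intro i j hij
            exact hg.1 ⟨i.val, by omega⟩ ⟨j.val, by omega⟩ hij
          · intro i; exact hg.2 _
          · intro i
            have h1 := hg.1 ⟨i.val, by omega⟩ ⟨c, by omega⟩ (by
              show i.val < c; exact i.isLt)
            have h2 := hdompm ⟨c, by omega⟩
            constructor <;> omega
        have := beforeS_card_succ (M := M) hdd hltm hpm
        omega
      · -- pm is a zero : saturation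
        have hz : M pm.1 pm.2 = false := by
          cases h : M pm.1 pm.2 with
          | false => rfl
          | true => exact absurd h hpm
        obtain ⟨t, htk, ⟨gB, hgB, hgBd⟩, ⟨gA, hgA, hgAd⟩⟩ := sat_zero hM hz
        -- combined chain : all of g followed by gA, length (c+1) + (k-1-t)
        have hcomb : ChainB M (fun j : Fin (c + 1 + (k - 1 - t)) =>
            if h : j.val < c + 1 then g ⟨j.val, h⟩ else gA ⟨j.val - (c + 1), by omega⟩) := by
          constructor
          · intro i j hij
            have hij0 : i.val < j.val := hij
            by_cases hi : i.val < c + 1 <;> by_cases hj : j.val < c + 1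
            · simp only [dif_pos hi, dif_pos hj]
              exact hg.1 _ _ (by show i.val < j.val; omega)
            · simp only [dif_pos hi, dif_neg hj]
              have h1 := hdompm ⟨i.val, hi⟩
              have h2 := hgAd ⟨j.val - (c + 1), by omega⟩
              simp [hpmdef] at h1 h2 ⊢
              constructor <;> omega
            · omega
            · simp only [dif_neg hi, dif_neg hj]
              exact hgA.1 _ _ (by show i.val - (c+1) < j.val - (c+1); omega)
          · intro i
            by_cases hi : i.val < c + 1
            · simp only [dif_pos hi]; exact hg.2 _
            · simp only [dif_neg hi]; exact hgA.2 _
        have hlen := chain_lt_of_avoids hM.1 _ hcomb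
        -- c + 1 ≤ t
        have hct : c + 1 ≤ t := by omega
        -- take the last c+1 elements of gB
        have hIH : c + 1 ≤ (beforeS M pm).card := by
          refine ih pm hpmN (c + 1) (fun j => gB ⟨t - (c + 1) + j.val, by omega⟩)
            ⟨?_, ?_⟩ ?_
          · intro i j hij
            exact hgB.1 _ _ (by
              show t - (c+1) + i.val < t - (c+1) + j.val
              have : i.val < j.val := hij
              omega)
          · intro i; exact hgB.2 _
          · intro i; exact hgBd _
        have := Finset.card_le_card (beforeS_mono (M := M) hdd hltm)
        omega

lemma after_ge {M : Fin m → Fin n → Bool} (hM : Saturating (Imat k) M) :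
    ∀ N : ℕ, ∀ p : Fin m × Fin n, m - 1 - p.1.val ≤ N →
      ∀ c : ℕ, ∀ g : Fin c → Fin m × Fin n, ChainB M g →
      (∀ i, p.1.val < (g i).1.val ∧ p.2.val < (g i).2.val) →
      c ≤ (afterS M p).card := by
  intro N
  induction N with
  | zero =>
    intro p hp c g hg hdom
    match c with
    | 0 => exact Nat.zero_le _
    | c + 1 =>
      have h1 := hdom ⟨0, by omega⟩
      have h2 := (g ⟨0, by omega⟩).1.isLt
      have h3 := p.1.isLt
      omega
  | succ N ih =>
    intro p hp c g hg hdom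
    match c with
    | 0 => exact Nat.zero_le _
    | c + 1 =>
      have hfst := hdom ⟨0, by omega⟩
      have hb1 := (g ⟨0, by omega⟩).1.isLt
      have hb2 := (g ⟨0, by omega⟩).2.isLt
      set pp : Fin m × Fin n :=
        (⟨p.1.val + 1, by omega⟩, ⟨p.2.val + 1, by omega⟩) with hppdef
      have hdd : p.1.val + pp.2.val = pp.1.val + p.2.val := by
        simp [hppdef]; omega
      have hltm : p.1.val < pp.1.val := by simp [hppdef]
      have hppN : m - 1 - pp.1.val ≤ N := by simp [hppdef]; omega
      have hdompp : ∀ i : Fin (c + 1), pp.1.val ≤ (g i).1.val ∧ pp.2.val ≤ (g i).2.val := by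
        intro i
        have := hdom i
        constructor <;> simp [hppdef] <;> omega
      by_cases hpp : M pp.1 pp.2 = true
      · have hIH : c ≤ (afterS M pp).card := by
          refine ih pp hppN c (fun j => g ⟨j.val + 1, by omega⟩) ⟨?_, ?_⟩ ?_
          · intro i j hij
            exact hg.1 _ _ (by
              show i.val + 1 < j.val + 1
              have : i.val < j.val := hij
              omega)
          · intro i; exact hg.2 _
          · intro i
            have h1 := hg.1 ⟨0, by omega⟩ ⟨i.val + 1, by omega⟩ (by
              show (0:ℕ) < i.val + 1; omega)
            have h2 := hdompp ⟨0, by omega⟩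
            constructor <;> omega
        have := afterS_card_succ (M := M) hdd hltm hpp
        omega
      · have hz : M pp.1 pp.2 = false := by
          cases h : M pp.1 pp.2 with
          | false => rfl
          | true => exact absurd h hpp
        obtain ⟨t, htk, ⟨gB, hgB, hgBd⟩, ⟨gA, hgA, hgAd⟩⟩ := sat_zero hM hz
        -- combined chain : gB followed by all of g, length t + (c+1)
        have hcomb : ChainB M (fun j : Fin (t + (c + 1)) =>
            if h : j.val < t then gB ⟨j.val, h⟩ else g ⟨j.val - t, by omega⟩) := by
          constructor
          · intro i j hij
            have hij0 : i.val < j.val := hij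
            by_cases hi : i.val < t <;> by_cases hj : j.val < t
            · simp only [dif_pos hi, dif_pos hj]
              exact hgB.1 _ _ (by show i.val < j.val; omega)
            · simp only [dif_pos hi, dif_neg hj]
              have h1 := hgBd ⟨i.val, hi⟩
              have h2 := hdompp ⟨j.val - t, by omega⟩
              simp [hppdef] at h1 h2 ⊢
              constructor <;> omega
            · omega
            · simp only [dif_neg hi, dif_neg hj]
              exact hg.1 _ _ (by show i.val - t < j.val - t; omega)
          · intro i
            by_cases hi : i.val < t
            · simp only [dif_pos hi]; exact hgB.2 _
            · simp only [dif_neg hi]; exact hg.2 _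
        have hlen := chain_lt_of_avoids hM.1 _ hcomb
        have hct : c + 1 ≤ k - 1 - t := by omega
        have hIH : c + 1 ≤ (afterS M pp).card := by
          refine ih pp hppN (c + 1) (fun j => gA ⟨j.val, by omega⟩) ⟨?_, ?_⟩ ?_
          · intro i j hij
            exact hgA.1 _ _ (by show i.val < j.val; exact hij)
          · intro i; exact hgA.2 _
          · intro i; exact hgAd _
        have := Finset.card_le_card (afterS_mono (M := M) hdd hltm)
        omega

def dIdx {m n : ℕ} (p : Fin m × Fin n) : ℕ := p.1.val + (n - 1 - p.2.val)

lemma fiber_le {M L : Fin m → Fin n → Bool} (hM : Saturating (Imat k) M)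
    (hL : Avoids (Imat k) L) (d : ℕ) :
    ((ones L).filter (fun q => dIdx q = d)).card ≤
    ((ones M).filter (fun q => dIdx q = d)).card := by
  have hLcard : ((ones L).filter (fun q => dIdx q = d)).card < k := by
    refine sameDiag_card_lt hL _ ?_ ?_
    · intro q hq; exact mem_ones.mp (Finset.mem_filter.mp hq).1
    · intro a ha b hb
      have h1 : dIdx a = d := (Finset.mem_filter.mp ha).2
      have h2 : dIdx b = d := (Finset.mem_filter.mp hb).2
      have := a.2.isLt; have := b.2.isLt
      unfold dIdx at h1 h2; omega
  by_cases hall : ∀ p : Fin m × Fin n, dIdx p = d → M p.1 p.2 = true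
  · apply Finset.card_le_card
    intro q hq
    obtain ⟨hq1, hq2⟩ := Finset.mem_filter.mp hq
    exact Finset.mem_filter.mpr ⟨mem_ones.mpr (hall q hq2), hq2⟩
  · push_neg at hall
    obtain ⟨p, hpd, hpz⟩ := hall
    have hpz' : M p.1 p.2 = false := by
      cases h : M p.1 p.2 with
      | false => rfl
      | true => exact absurd h hpz
    obtain ⟨t, htk, ⟨gB, hgB, hgBd⟩, ⟨gA, hgA, hgAd⟩⟩ := sat_zero hM hpz'
    have h1 : t ≤ (beforeS M p).card := before_ge hM p.1.val p le_rfl t gB hgB hgBd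
    have h2 : k - 1 - t ≤ (afterS M p).card :=
      after_ge hM (m - 1 - p.1.val) p le_rfl _ gA hgA hgAd
    have hsub : beforeS M p ∪ afterS M p ⊆ (ones M).filter (fun q => dIdx q = d) := by
      intro q hq
      have hq2 := q.2.isLt
      have hp2 := p.2.isLt
      rcases Finset.mem_union.mp hq with h | h
      · obtain ⟨ho, hsd, -⟩ := mem_beforeS.mp h
        refine Finset.mem_filter.mpr ⟨mem_ones.mpr ho, ?_⟩
        unfold dIdx at hpd ⊢; omega
      · obtain ⟨ho, hsd, -⟩ := mem_afterS.mp h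
        refine Finset.mem_filter.mpr ⟨mem_ones.mpr ho, ?_⟩
        unfold dIdx at hpd ⊢; omega
    have hdisj : Disjoint (beforeS M p) (afterS M p) := by
      rw [Finset.disjoint_left]
      intro q hq hq'
      have := (mem_beforeS.mp hq).2.2
      have := (mem_afterS.mp hq').2.2
      omega
    have hcard := Finset.card_union_of_disjoint hdisj
    have hle := Finset.card_le_card hsub
    omega

lemma weight_le_of_sat {M L : Fin m → Fin n → Bool} (hM : Saturating (Imat k) M)
    (hL : Avoids (Imat k) L) (hm : 1 ≤ m) (hn : 1 ≤ n) :
    weight L ≤ weight M := by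
  rw [weight_eq, weight_eq]
  have hb : ∀ (K : Fin m → Fin n → Bool), ∀ x ∈ ones K, dIdx x ∈ Finset.range (m + n - 1) := by
    intro K x _
    have := x.1.isLt; have := x.2.isLt
    rw [Finset.mem_range]; unfold dIdx; omega
  rw [Finset.card_eq_sum_card_fiberwise (hb L), Finset.card_eq_sum_card_fiberwise (hb M)]
  exact Finset.sum_le_sum (fun d _ => fiber_le hM hL d)

def rho (M : Fin m → Fin n → Bool) (p : Fin m × Fin n) : ℕ := (beforeS M p).card

lemma rho_le_min {M : Fin m → Fin n → Bool} (p : Fin m × Fin n) :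
    rho M p ≤ min p.1.val p.2.val := by
  have hmaps : ∀ q ∈ beforeS M p, q.1.val ∈
      Finset.Ico (p.1.val - min p.1.val p.2.val) p.1.val := by
    intro q hq
    obtain ⟨-, hsd, hlt⟩ := mem_beforeS.mp hq
    rw [Finset.mem_Ico]; omega
  have hinj : Set.InjOn (fun q : Fin m × Fin n => q.1.val) (beforeS M p) := by
    intro a ha b hb hab
    obtain ⟨-, h1, -⟩ := mem_beforeS.mp ha
    obtain ⟨-, h2, -⟩ := mem_beforeS.mp hb
    simp only at hab
    exact Prod.ext (Fin.ext hab) (Fin.ext (by omega))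
  have := Finset.card_le_card_of_injOn _ hmaps hinj
  rw [Nat.card_Ico] at this
  unfold rho; omega

lemma rho_lt_of_one {M : Fin m → Fin n → Bool} (hA : Avoids (Imat k) M)
    {p : Fin m × Fin n} (hp : M p.1 p.2 = true) : rho M p < k - 1 := by
  have hnot : p ∉ beforeS M p := by
    intro h; have := (mem_beforeS.mp h).2.2; omega
  have hcard : (insert p (beforeS M p)).card < k := by
    refine sameDiag_card_lt hA _ ?_ ?_
    · intro q hq
      rcases Finset.mem_insert.mp hq with h | h
      · subst h; exact hp
      · exact (mem_beforeS.mp h).1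
    · intro a ha b hb
      rcases Finset.mem_insert.mp ha with h | h <;>
        rcases Finset.mem_insert.mp hb with h' | h'
      · subst h; subst h'; rfl
      · subst h; have := (mem_beforeS.mp h').2.1; omega
      · subst h'; have := (mem_beforeS.mp h).2.1; omega
      · have := (mem_beforeS.mp h).2.1; have := (mem_beforeS.mp h').2.1; omega
  rw [Finset.card_insert_of_notMem hnot] at hcard
  unfold rho; omega

lemma rho_lt_rho {M : Fin m → Fin n → Bool} {p p' : Fin m × Fin n}
    (hp : M p.1 p.2 = true)
    (hd : p.1.val + p'.2.val = p'.1.val + p.2.val) (hlt : p.1.val < p'.1.val) :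
    rho M p < rho M p' := by
  have := beforeS_card_succ (M := M) (p := p') (pm := p) (by omega) hlt hp
  unfold rho; omega

def Lmat (k m n : ℕ) : Fin m → Fin n → Bool :=
  fun i j => decide (i.val < k - 1 ∨ j.val < k - 1)

lemma weight_le_of_avoids {M : Fin m → Fin n → Bool} (hA : Avoids (Imat k) M) :
    weight M ≤ weight (Lmat k m n) := by
  rw [weight_eq, weight_eq]
  refine Finset.card_le_card_of_injOn
    (fun p => ((⟨p.1.val - min p.1.val p.2.val + rho M p, by
        have h1 := rho_le_min (M := M) p
        have h2 := p.1.isLt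
        omega⟩ : Fin m),
      (⟨p.2.val - min p.1.val p.2.val + rho M p, by
        have h1 := rho_le_min (M := M) p
        have h2 := p.2.isLt
        omega⟩ : Fin n))) ?_ ?_
  · intro p hp
    have h1 := rho_le_min (M := M) p
    have h2 := rho_lt_of_one hA (mem_ones.mp hp)
    rw [Finset.mem_coe, mem_ones]
    simp only [Lmat, decide_eq_true_eq]
    omega
  · intro p hp p' hp' heq
    simp only [Prod.mk.injEq, Fin.mk.injEq] at heq
    obtain ⟨e1, e2⟩ := heq
    have h1 := rho_le_min (M := M) p
    have h1' := rho_le_min (M := M) p'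
    have hsd : p.1.val + p'.2.val = p'.1.val + p.2.val := by omega
    have hrr : rho M p = rho M p' := by omega
    rcases Nat.lt_trichotomy p.1.val p'.1.val with h | h | h
    · have := rho_lt_rho (mem_ones.mp hp) hsd h; omega
    · exact Prod.ext (Fin.ext h) (Fin.ext (by omega))
    · have := rho_lt_rho (mem_ones.mp hp') (by omega) h; omega

lemma card_filter_lt_val {m c : ℕ} (h : c ≤ m) :
    (Finset.univ.filter (fun i : Fin m => i.val < c)).card = c := by
  have heq : (Finset.univ.filter (fun i : Fin m => i.val < c)) =
      (Finset.range c).attachFin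
        (fun a ha => lt_of_lt_of_le (Finset.mem_range.mp ha) h) := by
    ext i; simp [Finset.mem_attachFin]
  rw [heq, Finset.card_attachFin, Finset.card_range]

lemma weight_Lmat (hm : k ≤ m) (hn : k ≤ n) :
    weight (Lmat k m n) = (k - 1) * (m + n - (k - 1)) := by
  rw [weight_eq]
  have hones : ones (Lmat k m n) =
      ((Finset.univ.filter (fun i : Fin m => i.val < k - 1)) ×ˢ (Finset.univ : Finset (Fin n))) ∪
      ((Finset.univ.filter (fun i : Fin m => ¬ i.val < k - 1)) ×ˢ
        (Finset.univ.filter (fun j : Fin n => j.val < k - 1))) := by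
    ext p
    simp [mem_ones, Lmat, Finset.mem_product]
    omega
  have hdisj : Disjoint
      ((Finset.univ.filter (fun i : Fin m => i.val < k - 1)) ×ˢ (Finset.univ : Finset (Fin n)))
      ((Finset.univ.filter (fun i : Fin m => ¬ i.val < k - 1)) ×ˢ
        (Finset.univ.filter (fun j : Fin n => j.val < k - 1))) := by
    rw [Finset.disjoint_left]
    intro a ha hb
    have h1 := (Finset.mem_filter.mp (Finset.mem_product.mp ha).1).2
    have h2 := (Finset.mem_filter.mp (Finset.mem_product.mp hb).1).2
    exact h2 h1
  rw [hones, Finset.card_union_of_disjoint hdisj, Finset.card_product, Finset.card_product]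
  have hc1 : (Finset.univ.filter (fun i : Fin m => i.val < k - 1)).card = k - 1 :=
    card_filter_lt_val (by omega)
  have hc2 : (Finset.univ.filter (fun j : Fin n => j.val < k - 1)).card = k - 1 :=
    card_filter_lt_val (by omega)
  have hc3 : (Finset.univ.filter (fun i : Fin m => ¬ i.val < k - 1)).card = m - (k - 1) := by
    have := Finset.card_filter_add_card_filter_not
      (s := (Finset.univ : Finset (Fin m))) (p := fun i : Fin m => i.val < k - 1)
    rw [Finset.card_univ, Fintype.card_fin] at this
    omega
  rw [hc1, hc2, hc3, Finset.card_univ, Fintype.card_fin]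
  have h1 : m + n - (k - 1) = n + (m - (k - 1)) := by omega
  rw [h1, Nat.mul_add, Nat.mul_comm (m - (k - 1)) (k - 1)]

lemma strictMono_val_le {a b : ℕ} {r : Fin a → Fin b} (hr : StrictMono r) (i : Fin a) :
    i.val ≤ (r i).val := by
  have H : ∀ v : ℕ, ∀ h : v < a, v ≤ (r ⟨v, h⟩).val := by
    intro v
    induction v with
    | zero => intro h; exact Nat.zero_le _
    | succ w ihw =>
      intro h
      have h1 : w < a := by omega
      have h2 := ihw h1
      have h3 : r ⟨w, h1⟩ < r ⟨w + 1, h⟩ := hr (by show w < w + 1; omega)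
      have h4 : (r ⟨w, h1⟩).val < (r ⟨w + 1, h⟩).val := h3
      omega
  have := H i.val i.isLt
  rwa [Fin.eta] at this

lemma avoids_Lmat (hk : 1 ≤ k) : Avoids (Imat k) (Lmat k m n) := by
  rintro ⟨r, c, hr, hc, hocc⟩
  have h := hocc ⟨k - 1, by omega⟩ ⟨k - 1, by omega⟩ (by simp [Imat])
  simp only [Lmat, decide_eq_true_eq] at h
  have h1 := strictMono_val_le hr ⟨k - 1, by omega⟩
  have h2 := strictMono_val_le hc ⟨k - 1, by omega⟩
  simp only [Fin.val_mk] at h1 h2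
  rcases h with h | h <;> omega

lemma sat_Lmat (hk : 1 ≤ k) (hm : k ≤ m) (hn : k ≤ n) :
    Saturating (Imat k) (Lmat k m n) := by
  refine ⟨avoids_Lmat hk, ?_⟩
  intro p q hz
  have hz' : ¬ (p.val < k - 1 ∨ q.val < k - 1) := by
    intro h
    have : Lmat k m n p q = true := by simp [Lmat]; tauto
    rw [hz] at this; exact Bool.false_ne_true this
  push_neg at hz'
  obtain ⟨hzp, hzq⟩ := hz'
  refine ⟨(fun i => if h : i.val < k - 1 then (⟨i.val, by omega⟩ : Fin m) else p),
          (fun i => if h : i.val < k - 1 then (⟨i.val, by omega⟩ : Fin n) else q),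
          ?_, ?_, ?_⟩
  · intro i j hij
    have hij0 : i.val < j.val := hij
    have hjk := j.isLt
    by_cases hi : i.val < k - 1 <;> by_cases hj : j.val < k - 1
    · simp only [dif_pos hi, dif_pos hj]
      exact hij0
    · simp only [dif_pos hi, dif_neg hj]
      rw [Fin.lt_def]; simp only [Fin.val_mk]; omega
    · omega
    · omega
  · intro i j hij
    have hij0 : i.val < j.val := hij
    have hjk := j.isLt
    by_cases hi : i.val < k - 1 <;> by_cases hj : j.val < k - 1
    · simp only [dif_pos hi, dif_pos hj]
      exact hij0
    · simp only [dif_pos hi, dif_neg hj]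
      rw [Fin.lt_def]; simp only [Fin.val_mk]; omega
    · omega
    · omega
  · intro i j hij
    rw [imat_iff] at hij; subst hij
    by_cases h : i.val < k - 1
    · simp only [dif_pos h]
      refine setOne_true_of ?_
      simp [Lmat]; omega
    · simp only [dif_neg h]
      exact setOne_self p q

end SatIk

/-- `sat(I_k,m,n) = ex(I_k,m,n) = (k-1)(m + n - (k-1))` for `m, n ≥ k`. -/
theorem sat_ex_Ik (k m n : ℕ) (hm : k ≤ m) (hn : k ≤ n) :
    satF (Imat k) m n = (k - 1) * (m + n - (k - 1)) ∧
    exF (Imat k) m n = (k - 1) * (m + n - (k - 1)) := by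
  rcases Nat.eq_zero_or_pos k with rfl | hk
  · have hcont : ∀ M : Fin m → Fin n → Bool, Contains (Imat 0) M :=
      fun M => ⟨fun i => i.elim0, fun i => i.elim0,
        fun a => a.elim0, fun a => a.elim0, fun i => i.elim0⟩
    have hsat : {w | ∃ M : Fin m → Fin n → Bool, Saturating (Imat 0) M ∧ weight M = w} = ∅ := by
      ext w
      simp only [Set.mem_setOf_eq, Set.mem_empty_iff_false, iff_false]
      rintro ⟨M, hM, -⟩
      exact hM.1 (hcont M)
    have hex : {w | ∃ M : Fin m → Fin n → Bool, Avoids (Imat 0) M ∧ weight M = w} = ∅ := by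
      ext w
      simp only [Set.mem_setOf_eq, Set.mem_empty_iff_false, iff_false]
      rintro ⟨M, hM, -⟩
      exact hM (hcont M)
    constructor
    · rw [satF, hsat, Nat.sInf_empty]
      simp
    · rw [exF, hex]
      simp
  · have hk1 : 1 ≤ k := hk
    have hm1 : 1 ≤ m := le_trans hk hm
    have hn1 : 1 ≤ n := le_trans hk hn
    have hW := SatIk.weight_Lmat (k := k) (m := m) (n := n) hm hn
    have hsatL := SatIk.sat_Lmat hk1 hm hn
    have havL : Avoids (Imat k) (SatIk.Lmat k m n) := SatIk.avoids_Lmat hk1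
    constructor
    · rw [satF]
      have hleast : IsLeast {w | ∃ M : Fin m → Fin n → Bool,
          Saturating (Imat k) M ∧ weight M = w} (weight (SatIk.Lmat k m n)) := by
        constructor
        · exact ⟨SatIk.Lmat k m n, hsatL, rfl⟩
        · rintro w ⟨M, hM, rfl⟩
          exact SatIk.weight_le_of_sat hM havL hm1 hn1
      rw [hleast.csInf_eq, hW]
    · rw [exF]
      have hgreat : IsGreatest {w | ∃ M : Fin m → Fin n → Bool,
          Avoids (Imat k) M ∧ weight M = w} (weight (SatIk.Lmat k m n)) := by
        constructor
        · exact ⟨SatIk.Lmat k m n, havL, rfl⟩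
        · rintro w ⟨M, hM, rfl⟩
          exact SatIk.weight_le_of_avoids hM
      rw [hgreat.csSup_eq, hW]
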